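/- Let A₀(x, y)(u, w) = Im(|y|²·x⁻¹·u + |x|²·y⁻¹·w)/(|x|² + |y|²), defined for x, y ∈ ℍ∖{0}, and let g(x, y) = y/|y|. Then for all x, y ≠ 0 and all tangent vectors (u, w) ∈ ℍ²: g·A₀(x, y)(u, w)·ḡ − (Dg)(x, y)(u, w)·ḡ = Im( y·x⁻¹·u·ȳ + y·w̄ )/(|x|² + |y|²), where Dg is the Fréchet derivative of g as an ℍ-valued function. In particular, the right-hand side extends smoothly to the region {x ≠ 0}, removing the singularity of A₀ along y = 0. -/

import Mathlib

/- STATEMENT 14: Applying the gauge transformation g(x,y) = y/|y| to the standard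
G₂-instanton connection form A₀ yields
g·A₀·ḡ − (dg)·ḡ = Im(y·x⁻¹·u·ȳ + y·w̄)/(|x|²+|y|²), which extends smoothly to the
region {x ≠ 0}, removing the singularity of A₀ along y = 0. -/

open Quaternion

noncomputable section

/-- The standard G₂-instanton connection form on ℍ² ≅ ℝ⁸. -/
def A0 : ℍ[ℝ] × ℍ[ℝ] → ℍ[ℝ] × ℍ[ℝ] → ℍ[ℝ] := fun p t =>
  ((‖p.1‖ ^ 2 + ‖p.2‖ ^ 2)⁻¹ : ℝ) •
    ((‖p.2‖ ^ 2 : ℝ) • (p.1⁻¹ * t.1) + (‖p.1‖ ^ 2 : ℝ) • (p.2⁻¹ * t.2)).im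

/-- The gauge transformation g(x,y) = y/|y|. -/
def gg : ℍ[ℝ] × ℍ[ℝ] → ℍ[ℝ] := fun p => (‖p.2‖⁻¹ : ℝ) • p.2

/-! ### Auxiliary lemmas -/

lemma hasFDerivAt_inv_norm (y : ℍ[ℝ]) (hy : y ≠ 0) :
    HasFDerivAt (fun y : ℍ[ℝ] => ‖y‖⁻¹)
      ((-(1/(2*‖y‖)) / ‖y‖^2) • (2 • (innerSL ℝ y))) y := by
  have hne : (‖y‖^2 : ℝ) ≠ 0 := pow_ne_zero 2 (norm_ne_zero_iff.2 hy)
  have hs : HasFDerivAt (fun y : ℍ[ℝ] => ‖y‖ ^ 2) (2 • (innerSL ℝ y)) y := by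
    simpa using (hasFDerivAt_id y).norm_sq
  have hsqrt : HasDerivAt (fun t => (Real.sqrt t)⁻¹)
      (-(1/(2*Real.sqrt (‖y‖^2))) / (Real.sqrt (‖y‖^2))^2) (‖y‖^2) :=
    (Real.hasDerivAt_sqrt hne).inv (by simp [Real.sqrt_sq, norm_nonneg, hy])
  have h2 := hsqrt.comp_hasFDerivAt y hs
  simp only [Real.sqrt_sq (norm_nonneg y)] at h2
  have : (fun z : ℍ[ℝ] => ‖z‖⁻¹) = (fun t => (Real.sqrt t)⁻¹) ∘ fun z : ℍ[ℝ] => ‖z‖ ^ 2 := by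
    funext z; simp [Real.sqrt_sq (norm_nonneg z)]
  rw [this]; exact h2

lemma fderiv_gg_apply (x y : ℍ[ℝ]) (hy : y ≠ 0) (u w : ℍ[ℝ]) :
    fderiv ℝ gg (x, y) (u, w)
      = ‖y‖⁻¹ • w - ((‖y‖^3)⁻¹ * (y * star w).re) • y := by
  have hh : HasFDerivAt (fun y : ℍ[ℝ] => ‖y‖⁻¹ • y)
      (‖y‖⁻¹ • ContinuousLinearMap.id ℝ ℍ[ℝ]
        + ((-(1/(2*‖y‖)) / ‖y‖^2) • (2 • (innerSL ℝ y))).smulRight y) y :=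
    (hasFDerivAt_inv_norm y hy).smul (hasFDerivAt_id y)
  have hgg : HasFDerivAt gg
      ((‖y‖⁻¹ • ContinuousLinearMap.id ℝ ℍ[ℝ]
        + ((-(1/(2*‖y‖)) / ‖y‖^2) • (2 • (innerSL ℝ y))).smulRight y).comp
        (ContinuousLinearMap.snd ℝ ℍ[ℝ] ℍ[ℝ])) (x, y) :=
    by have := hh.comp (x, y) (hasFDerivAt_snd (𝕜 := ℝ) (p := (x, y))); exact this
  rw [hgg.fderiv]
  have hn : (‖y‖:ℝ) ≠ 0 := norm_ne_zero_iff.2 hy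
  simp only [ContinuousLinearMap.comp_apply, ContinuousLinearMap.coe_snd',
    ContinuousLinearMap.add_apply, ContinuousLinearMap.smul_apply,
    ContinuousLinearMap.id_apply, ContinuousLinearMap.smulRight_apply,
    ContinuousLinearMap.smul_apply, innerSL_apply_apply]
  have hinner : (inner ℝ y w : ℝ) = (y * star w).re := rfl
  simp only [ContinuousLinearMap.coe_snd', hinner]
  rw [sub_eq_add_neg]
  congr 1
  rw [← neg_smul]
  congr 1
  field_simp
  simp only [smul_eq_mul, nsmul_eq_mul, Nat.cast_ofNat]
  field_simp

lemma L1 (y q : ℍ[ℝ]) : y * q.im * star y = (y * q * star y).im := by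
  ext <;> simp [Quaternion.re_mul, Quaternion.imI_mul, Quaternion.imJ_mul, Quaternion.imK_mul] <;>
    ring

lemma re_comm (a b : ℍ[ℝ]) : (a * b).re = (b * a).re := by
  simp [Quaternion.re_mul]; ring

lemma smul_one_coe (r : ℝ) : r • (1:ℍ[ℝ]) = (r : ℍ[ℝ]) := by
  rw [← Quaternion.coe_one, Quaternion.smul_coe, mul_one]

lemma contDiff_im : ContDiff ℝ (⊤ : ℕ∞) (fun q : ℍ[ℝ] => q.im) := by
  have h : ∀ q : ℍ[ℝ], q.im = q - (inner ℝ (1:ℍ[ℝ]) q : ℝ) • (1:ℍ[ℝ]) := by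
    intro q
    have : (inner ℝ (1:ℍ[ℝ]) q : ℝ) = q.re := by
      simp [Quaternion.inner_def]
    rw [this, ← Quaternion.coe_one, Quaternion.smul_coe, mul_one]
    exact (Quaternion.sub_re_self q).symm
  simp only [h]
  exact contDiff_id.sub ((contDiff_const.inner ℝ contDiff_id).smul contDiff_const)

lemma contDiff_star_q : ContDiff ℝ (⊤ : ℕ∞) (fun q : ℍ[ℝ] => star q) := by
  have h : ∀ q : ℍ[ℝ], star q = (2 * (inner ℝ (1:ℍ[ℝ]) q : ℝ)) • (1:ℍ[ℝ]) - q := by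
    intro q
    have h1 : (inner ℝ (1:ℍ[ℝ]) q : ℝ) = q.re := by simp [Quaternion.inner_def]
    rw [h1, ← Quaternion.coe_one, Quaternion.smul_coe, mul_one]
    ext <;> simp <;> ring
  simp only [h]
  exact ((contDiff_const.mul (contDiff_const.inner ℝ contDiff_id)).smul contDiff_const).sub
    contDiff_id

theorem gauge_transformed_A0 :
    (∀ x y : ℍ[ℝ], x ≠ 0 → y ≠ 0 → ∀ u w : ℍ[ℝ],
      gg (x, y) * A0 (x, y) (u, w) * star (gg (x, y)) -
          fderiv ℝ gg (x, y) (u, w) * star (gg (x, y)) =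
        ((‖x‖ ^ 2 + ‖y‖ ^ 2)⁻¹ : ℝ) • (y * x⁻¹ * u * star y + y * star w).im) ∧
    ∀ u w : ℍ[ℝ],
      ContDiffOn ℝ (⊤ : ℕ∞)
        (fun p : ℍ[ℝ] × ℍ[ℝ] =>
          ((‖p.1‖ ^ 2 + ‖p.2‖ ^ 2)⁻¹ : ℝ) •
            (p.2 * p.1⁻¹ * u * star p.2 + p.2 * star w).im)
        {p : ℍ[ℝ] × ℍ[ℝ] | p.1 ≠ 0} := by
  constructor
  · intro x y hx hy u w
    have hb : (‖y‖:ℝ) ≠ 0 := norm_ne_zero_iff.2 hy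
    have hb2 : (‖y‖^2:ℝ) ≠ 0 := pow_ne_zero _ hb
    have hab : (‖x‖^2 + ‖y‖^2 : ℝ) ≠ 0 := by positivity
    rw [fderiv_gg_apply x y hy u w]
    have hyy : y * star y = ((‖y‖^2 : ℝ) : ℍ[ℝ]) := by
      rw [Quaternion.self_mul_star, Quaternion.normSq_eq_norm_mul_self, sq]
    have c1 : gg (x,y) * A0 (x,y) (u,w) * star (gg (x,y))
        = ((‖x‖^2+‖y‖^2)⁻¹ : ℝ) • (y * x⁻¹ * u * star y).im
          + ((‖x‖^2+‖y‖^2)⁻¹ * ‖x‖^2 * (‖y‖^2)⁻¹) • (w * star y).im := by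
      simp only [gg, A0, Quaternion.star_smul, smul_mul_assoc, mul_smul_comm, smul_smul,
        Quaternion.im_add, Quaternion.im_smul, smul_add, mul_add, add_mul, ← mul_assoc]
      rw [L1 y (x⁻¹ * u), L1 y (y⁻¹ * w)]
      rw [show y * (x⁻¹ * u) = y * x⁻¹ * u from (mul_assoc _ _ _).symm,
        show y * (y⁻¹ * w) = w by rw [← mul_assoc, mul_inv_cancel₀ hy, one_mul]]
      match_scalars <;> field_simp <;> try ring
    have c2 : (‖y‖⁻¹ • w - ((‖y‖^3)⁻¹ * (y * star w).re) • y) * star (gg (x,y))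
        = ((‖y‖^2)⁻¹ : ℝ) • (w * star y).im := by
      simp only [gg, Quaternion.star_smul, sub_mul, smul_mul_assoc, mul_smul_comm, smul_smul,
        smul_sub]
      rw [hyy]
      have h : (y * star w).re = (w * star y).re := by
        rw [re_comm]; simp [← star_mul]
      rw [h, ← smul_one_coe]
      have him : (w * star y).im = (w * star y) - (w * star y).re • (1:ℍ[ℝ]) := by
        rw [smul_one_coe]; exact (Quaternion.sub_re_self _).symm
      rw [him]
      match_scalars <;> field_simp <;> try ring
    rw [c1, c2]
    simp only [Quaternion.im_add]
    have h3 : (y * star w).im = -(w * star y).im := by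
      rw [show y * star w = star (w * star y) by rw [star_mul, star_star],
        Quaternion.im_star]
    rw [h3, smul_add]
    match_scalars <;> field_simp <;> try ring
  · intro u w
    have hinv : ContDiffOn ℝ (⊤ : ℕ∞) (fun p : ℍ[ℝ] × ℍ[ℝ] => p.1⁻¹)
        {p : ℍ[ℝ] × ℍ[ℝ] | p.1 ≠ 0} := by
      intro p hp
      have : ContDiffAt ℝ (⊤ : ℕ∞) (fun q : ℍ[ℝ] => Ring.inverse q) p.1 :=
        contDiffAt_ringInverse ℝ (Units.mk0 p.1 hp)
      have h2 : ContDiffAt ℝ (⊤ : ℕ∞) (fun p : ℍ[ℝ] × ℍ[ℝ] => Ring.inverse p.1) p :=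
        this.comp p contDiffAt_fst
      refine (h2.congr_of_eventuallyEq ?_).contDiffWithinAt
      exact Filter.Eventually.of_forall fun q => (Ring.inverse_eq_inv q.1).symm
    have hscal : ContDiffOn ℝ (⊤ : ℕ∞) (fun p : ℍ[ℝ] × ℍ[ℝ] => ((‖p.1‖ ^ 2 + ‖p.2‖ ^ 2)⁻¹ : ℝ))
        {p : ℍ[ℝ] × ℍ[ℝ] | p.1 ≠ 0} := by
      refine ContDiffOn.inv ?_ ?_
      · exact ((contDiff_fst.norm_sq ℝ).add (contDiff_snd.norm_sq ℝ)).contDiffOn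
      · intro p hp
        have hp' : p.1 ≠ 0 := hp
        have h1 : (0:ℝ) < ‖p.1‖ := norm_pos_iff.2 hp'
        nlinarith [sq_nonneg ‖p.2‖]
    refine hscal.smul ?_
    refine (contDiff_im.comp_contDiffOn ?_)
    refine ContDiffOn.add ?_ ?_
    · exact ((contDiff_snd.contDiffOn.mul hinv).mul contDiffOn_const).mul
        ((contDiff_star_q.comp contDiff_snd).contDiffOn)
    · exact contDiff_snd.contDiffOn.mul contDiffOn_const
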